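/- The integral of exp(-x²)·ln(x) over x from 0 to infinity equals -(√π/4)·(γ + 2·ln 2), where γ is the Euler–Mascheroni constant. -/

import Mathlib

open Real MeasureTheory

lemma aux_J :
    (∫ t in Set.Ioi (0:ℝ), t ^ (-(1/2) : ℝ) * (Real.log t * Real.exp (-t)))
      = -Real.sqrt π * (Real.eulerMascheroniConstant + 2 * Real.log 2) := by
  set J : ℝ := ∫ t in Set.Ioi (0:ℝ), t ^ (-(1/2) : ℝ) * (Real.log t * Real.exp (-t))
  have hc : HasDerivAt Complex.GammaIntegral
      (∫ t : ℝ in Set.Ioi 0, (t : ℂ) ^ ((1/2 : ℂ) - 1) * (Real.log t * Real.exp (-t)))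
      (1/2 : ℂ) := Complex.hasDerivAt_GammaIntegral (by norm_num)
  have hre : (∫ t : ℝ in Set.Ioi 0, (t : ℂ) ^ ((1/2 : ℂ) - 1) * (Real.log t * Real.exp (-t)))
      = (J : ℂ) := by
    rw [show (J : ℂ) = ∫ t in Set.Ioi (0:ℝ),
        ((t ^ (-(1/2) : ℝ) * (Real.log t * Real.exp (-t)) : ℝ) : ℂ) from
      (integral_ofReal).symm]
    refine setIntegral_congr_fun measurableSet_Ioi (fun t ht => ?_)
    have h1 : ((1/2 : ℂ) - 1) = ((-(1/2) : ℝ) : ℂ) := by norm_num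
    rw [h1, ← Complex.ofReal_cpow (le_of_lt ht)]
    push_cast
    ring
  rw [hre] at hc
  have hG : HasDerivAt Complex.Gamma (J : ℂ) (1/2 : ℂ) := by
    refine hc.congr_of_eventuallyEq ?_
    have hopen : IsOpen {s : ℂ | 0 < s.re} := isOpen_lt continuous_const Complex.continuous_re
    filter_upwards [hopen.mem_nhds (by norm_num : (0:ℝ) < ((1/2 : ℂ)).re)] with s hs
    exact Complex.Gamma_eq_integral hs
  have hG' : HasDerivAt Complex.Gamma (J : ℂ) (((1/2 : ℝ) : ℂ)) := by
    have : (((1/2 : ℝ) : ℂ)) = (1/2 : ℂ) := by norm_num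
    rw [this]; exact hG
  have hR : HasDerivAt Real.Gamma ((J : ℂ)).re (1/2 : ℝ) := by
    have := hG'.real_of_complex
    simpa [Complex.Gamma_ofReal] using this
  have h2 : HasDerivAt Real.Gamma
      (-Real.sqrt π * (Real.eulerMascheroniConstant + 2 * Real.log 2)) (1/2 : ℝ) :=
    Real.hasDerivAt_Gamma_one_half
  have := hR.unique h2
  simpa using this

theorem stmt_10 :
    ∫ x in Set.Ioi (0:ℝ), Real.exp (-x ^ 2) * Real.log x
      = -(Real.sqrt π / 4) * (Real.eulerMascheroniConstant + 2 * Real.log 2) := by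
  have hsub := integral_comp_rpow_Ioi_of_pos
    (g := fun t : ℝ => t ^ (-(1/2) : ℝ) * (Real.log t * Real.exp (-t))) (p := 2) two_pos
  have hL : (∫ x in Set.Ioi (0:ℝ),
      ((2:ℝ) * x ^ ((2:ℝ) - 1)) • ((x ^ (2:ℝ)) ^ (-(1/2) : ℝ) *
        (Real.log (x ^ (2:ℝ)) * Real.exp (-(x ^ (2:ℝ))))))
      = ∫ x in Set.Ioi (0:ℝ), 4 * (Real.exp (-x ^ 2) * Real.log x) := by
    refine setIntegral_congr_fun measurableSet_Ioi (fun x hx => ?_)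
    have hx0 : (0:ℝ) < x := hx
    have hxsq : x ^ (2:ℝ) = x ^ 2 := by
      rw [show (2:ℝ) = ((2:ℕ):ℝ) by norm_num, Real.rpow_natCast]
    have h1 : (x ^ (2:ℝ)) ^ (-(1/2) : ℝ) = x⁻¹ := by
      rw [← Real.rpow_mul hx0.le, show (2:ℝ) * -(1/2) = -1 by norm_num,
        Real.rpow_neg_one]
    have h2 : Real.log (x ^ (2:ℝ)) = 2 * Real.log x := by
      rw [hxsq, Real.log_pow]; norm_num
    have h3 : x ^ ((2:ℝ) - 1) = x := by
      norm_num
    rw [hxsq] at h1 h2 ⊢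
    rw [h1, h2, h3, smul_eq_mul]
    field_simp
    ring
  rw [hL, MeasureTheory.integral_const_mul, aux_J] at hsub
  linarith [hsub]
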